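/- Let T be a vtree over a finite variable set X and let C be an nTDD of width k respecting T. Then there exists a full TDD C' respecting T, of width at most 2^k, computing the same Boolean function as C. -/
import Mathlib


/-- A vtree: a rooted binary tree whose leaves are labeled by variables. -/
inductive Vtree (V : Type) where
  | leaf : V → Vtree V
  | node : Vtree V → Vtree V → Vtree V

namespace Vtree

variable {V : Type} [DecidableEq V]

/-- The set of variables labeling the leaves of a vtree. -/
def vars : Vtree V → Finset V
  | leaf x => {x}
  | node l r => l.vars ∪ r.vars

/-- A vtree is proper when its leaves carry pairwise distinct variables,
so that the leaves are in one-to-one correspondence with `vars`. -/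
def Proper : Vtree V → Prop
  | leaf _ => True
  | node l r => l.Proper ∧ r.Proper ∧ Disjoint l.vars r.vars

/-- `T.IsNode t` : `t` is (the subtree rooted at) a node of `T`. -/
def IsNode : Vtree V → Vtree V → Prop
  | leaf x, t => t = leaf x
  | node l r, t => t = node l r ∨ l.IsNode t ∨ r.IsNode t

/-- Remove every leaf whose variable is in `Y`, suppressing unary nodes.
Returns `none` if no leaf survives. -/
def restrict (Y : Finset V) : Vtree V → Option (Vtree V)
  | leaf x => if x ∈ Y then none else some (leaf x)
  | node l r =>
    match l.restrict Y, r.restrict Y with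
    | none, o => o
    | some l', none => some l'
    | some l', some r' => some (node l' r')

/-- The vtree `T ∖ x`. -/
def remove (x : V) (T : Vtree V) : Option (Vtree V) := T.restrict {x}

/-- A vtree is linear when every internal node has a leaf child. -/
def Linear : Vtree V → Prop
  | leaf _ => True
  | node l r => ((∃ x, l = leaf x) ∨ (∃ x, r = leaf x)) ∧ l.Linear ∧ r.Linear

/-- The variable order induced by a linear vtree. -/
def order : Vtree V → List V
  | leaf x => [x]
  | node (leaf x) r => x :: r.order
  | node l (leaf x) => x :: l.order
  | node l r => l.order ++ r.order

end Vtree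

/-- Labels of leaf-layer nodes of a TDD: the positive literal, the negative
literal, and the constants 1 and 0. -/
inductive TLab where
  | pos | neg | one | zero
deriving DecidableEq

/-- Disjunction of two leaf labels (used when contracting twin leaf nodes). -/
def TLab.lor : TLab → TLab → TLab
  | .zero, a => a
  | a, .zero => a
  | .one, _ => .one
  | _, .one => .one
  | .pos, .pos => .pos
  | .neg, .neg => .neg
  | .pos, .neg => .one
  | .neg, .pos => .one

/-- A (non-deterministic) tree decision diagram structured along a vtree:
one layer of nodes (identified by natural numbers) per vtree node; leaf-layer
nodes carry labels, internal-layer nodes carry their sets of input pairs. -/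
inductive NTDD (V : Type) where
  | leaf (x : V) (ns : Finset ℕ) (lab : ℕ → TLab)
  | node (l r : NTDD V) (ns : Finset ℕ) (E : ℕ → Finset (ℕ × ℕ))

namespace NTDD

variable {V : Type}

/-- The vtree that an nTDD is structured along. -/
def shape : NTDD V → Vtree V
  | leaf x _ _ => .leaf x
  | node l r _ _ => .node l.shape r.shape

/-- The set of nodes of the top (root) layer. -/
def nodes : NTDD V → Finset ℕ
  | leaf _ ns _ => ns
  | node _ _ ns _ => ns

/-- The size of an nTDD: the total number of input pairs. -/
def size : NTDD V → ℕ
  | leaf _ _ _ => 0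
  | node l r ns E => l.size + r.size + ∑ g ∈ ns, (E g).card

/-- The width of an nTDD: the maximal cardinality of a layer. -/
def width : NTDD V → ℕ
  | leaf _ ns _ => ns.card
  | node l r ns _ => max ns.card (max l.width r.width)

/-- `C.sat g τ` : (the restriction of) the assignment `τ` is a model of the
function `f_g` computed by the top-layer node `g` of `C`. -/
def sat : NTDD V → ℕ → (V → Bool) → Prop
  | leaf x _ lab, g, τ =>
    match lab g with
    | .pos => τ x = true
    | .neg => τ x = false
    | .one => True
    | .zero => False
  | node l r _ E, g, τ => ∃ p ∈ E g, l.sat p.1 τ ∧ r.sat p.2 τ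

/-- Well-formedness: input pairs of top-layer nodes reference nodes of the
children layers. -/
def WF : NTDD V → Prop
  | leaf _ _ _ => True
  | node l r ns E => l.WF ∧ r.WF ∧ ∀ g ∈ ns, ∀ p ∈ E g, p.1 ∈ l.nodes ∧ p.2 ∈ r.nodes

/-- Determinism, turning an nTDD into a TDD: at each leaf layer at most one
node labeled by each of `x`, `¬x`, `1`, and if a node is labeled `1` then all
other nodes are labeled `0`; at each internal layer every pair is the input of
at most one node. -/
def Det : NTDD V → Prop
  | leaf _ ns lab =>
      (∀ g ∈ ns, ∀ g' ∈ ns, lab g = TLab.pos → lab g' = TLab.pos → g = g') ∧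
      (∀ g ∈ ns, ∀ g' ∈ ns, lab g = TLab.neg → lab g' = TLab.neg → g = g') ∧
      (∀ g ∈ ns, ∀ g' ∈ ns, lab g = TLab.one → lab g' = TLab.one → g = g') ∧
      (∀ g ∈ ns, lab g = TLab.one → ∀ g' ∈ ns, g' ≠ g → lab g' = TLab.zero)
  | node l r ns E => l.Det ∧ r.Det ∧ ∀ g ∈ ns, ∀ g' ∈ ns, g ≠ g' → Disjoint (E g) (E g')

/-- `C.Subdiagram D` : `D` is the sub-diagram of `C` sitting at some node of
the underlying vtree (including `C` itself). -/
def Subdiagram : NTDD V → NTDD V → Prop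
  | leaf x ns lab, D => D = leaf x ns lab
  | node l r ns E, D => D = node l r ns E ∨ l.Subdiagram D ∨ r.Subdiagram D

/-- A TDD is full if, at every layer, every assignment is a model of some node
of that layer. -/
def Full (C : NTDD V) : Prop :=
  ∀ D : NTDD V, C.Subdiagram D → ∀ τ : V → Bool, ∃ g ∈ D.nodes, D.sat g τ

end NTDD

/-- A choice of one node id per vtree node, mirroring the vtree: the data of a
certificate. -/
inductive IdTree where
  | leaf (g : ℕ)
  | node (g : ℕ) (l r : IdTree)

/-- The id chosen at the root. -/
def IdTree.root : IdTree → ℕ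
  | .leaf g => g
  | .node g _ _ => g

namespace NTDD

variable {V : Type}

/-- `C.IsCert P τ` : the choice `P` of one node per layer is a certificate for
`τ` in `C` (except for the root condition `P.root = out`, stated separately):
at a leaf labeled `x` the chosen node is labeled `1` or by a literal satisfied
by `τ`, and at an internal node the chosen pair of children nodes is an input
of the chosen node. -/
def IsCert : NTDD V → IdTree → (V → Bool) → Prop
  | leaf x ns lab, IdTree.leaf g, τ =>
      g ∈ ns ∧ (lab g = TLab.one ∨ (lab g = TLab.pos ∧ τ x = true) ∨
        (lab g = TLab.neg ∧ τ x = false))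
  | node l r ns E, IdTree.node g pl pr, τ =>
      g ∈ ns ∧ (pl.root, pr.root) ∈ E g ∧ l.IsCert pl τ ∧ r.IsCert pr τ
  | _, _, _ => False

/-- `SubPair C P D Q` : `D` is the sub-diagram of `C` at some vtree node `t`,
and `Q` is the corresponding part of the certificate data `P` (so `Q.root` is
the node that `P` chooses at `t`). -/
def SubPair : NTDD V → IdTree → NTDD V → IdTree → Prop
  | leaf x ns lab, P, D, Q => D = leaf x ns lab ∧ Q = P
  | node l r ns E, P, D, Q =>
      (D = node l r ns E ∧ Q = P) ∨
      (match P with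
       | IdTree.node _ pl pr => l.SubPair pl D Q ∨ r.SubPair pr D Q
       | _ => False)

/-- Contract the two top-layer nodes `g1, g1'` into the fresh node `v`. -/
def contractLayer (g1 g1' v : ℕ) : NTDD V → NTDD V
  | leaf x ns lab =>
      leaf x (insert v ((ns.erase g1).erase g1'))
        (fun g => if g = v then (lab g1).lor (lab g1') else lab g)
  | node l r ns E =>
      node l r (insert v ((ns.erase g1).erase g1'))
        (fun g => if g = v then E g1 ∪ E g1' else E g)

/-- Twin contraction of nodes `g1, g1'` of the left child layer into `v`:
they are merged in the left layer, and every input pair `(g1, g2)` or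
`(g1', g2)` of a top-layer node is replaced by `(v, g2)`. -/
def contractAtL (g1 g1' v : ℕ) : NTDD V → NTDD V
  | node l r ns E =>
      node (l.contractLayer g1 g1' v) r ns
        (fun g => (E g).image (fun p => if p.1 = g1 ∨ p.1 = g1' then (v, p.2) else p))
  | C => C

/-- Twin contraction of nodes `g1, g1'` of the right child layer into `v`. -/
def contractAtR (g1 g1' v : ℕ) : NTDD V → NTDD V
  | node l r ns E =>
      node l (r.contractLayer g1 g1' v) ns
        (fun g => (E g).image (fun p => if p.2 = g1 ∨ p.2 = g1' then (p.1, v) else p))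
  | C => C

open Classical in
/-- Replace the sub-diagram `D` of `C` by `D'` (in a proper vtree, sub-diagrams
at distinct positions are distinct, so this is unambiguous). -/
noncomputable def replace : NTDD V → NTDD V → NTDD V → NTDD V
  | leaf x ns lab, D, D' => if leaf x ns lab = D then D' else leaf x ns lab
  | node l r ns E, D, D' =>
      if node l r ns E = D then D'
      else node (l.replace D D') (r.replace D D') ns E

/-- `g1` and `g1'` are twins of the left child layer: they have the same
siblings with respect to every top-layer node. -/
def TwinsL (g1 g1' : ℕ) : NTDD V → Prop
  | node l _ ns E => g1 ∈ l.nodes ∧ g1' ∈ l.nodes ∧ g1 ≠ g1' ∧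
      ∀ g ∈ ns, ∀ g2 : ℕ, ((g1, g2) ∈ E g ↔ (g1', g2) ∈ E g)
  | _ => False

/-- `g1` and `g1'` are twins of the right child layer. -/
def TwinsR (g1 g1' : ℕ) : NTDD V → Prop
  | node _ r ns E => g1 ∈ r.nodes ∧ g1' ∈ r.nodes ∧ g1 ≠ g1' ∧
      ∀ g ∈ ns, ∀ g2 : ℕ, ((g2, g1) ∈ E g ↔ (g2, g1') ∈ E g)
  | _ => False

/-- The node set of the left child layer. -/
def leftNodes : NTDD V → Finset ℕ
  | node l _ _ _ => l.nodes
  | _ => ∅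

/-- The node set of the right child layer. -/
def rightNodes : NTDD V → Finset ℕ
  | node _ r _ _ => r.nodes
  | _ => ∅

end NTDD

/-- The number of distinct non-trivial `Y`-subfunctions of the Boolean
function `f` : functions of the form `σ ↦ f (Y.piecewise τ σ)` for some
`τ`, having at least one model. -/
noncomputable def subCount {V : Type} [DecidableEq V] (f : (V → Bool) → Prop) (Y : Finset V) : ℕ :=
  Nat.card {h : (V → Bool) → Prop |
    (∃ τ : V → Bool, h = fun σ => f (Y.piecewise τ σ)) ∧ ∃ σ : V → Bool, h σ}

/-- The number of distinct `Y`-subfunctions of `f` (trivial ones included). -/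
noncomputable def subCountAll {V : Type} [DecidableEq V] (f : (V → Bool) → Prop) (Y : Finset V) : ℕ :=
  Nat.card {h : (V → Bool) → Prop |
    ∃ τ : V → Bool, h = fun σ => f (Y.piecewise τ σ)}

section DetAux

variable {V : Type}

/-- Injective encoding of finite sets of naturals as naturals. -/
def encS (S : Finset ℕ) : ℕ := Encodable.encode S

noncomputable def decS (n : ℕ) : Finset ℕ := (Encodable.decode (α := Finset ℕ) n).getD ∅

lemma decS_encS (S : Finset ℕ) : decS (encS S) = S := by
  simp [decS, encS, Encodable.encodek]

lemma encS_inj : Function.Injective encS := Encodable.encode_injective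

def posSet (ns : Finset ℕ) (lab : ℕ → TLab) : Finset ℕ :=
  ns.filter (fun g => lab g = .pos ∨ lab g = .one)

def negSet (ns : Finset ℕ) (lab : ℕ → TLab) : Finset ℕ :=
  ns.filter (fun g => lab g = .neg ∨ lab g = .one)

open Classical in
/-- The set of root-layer nodes of `C` satisfied by `τ`. -/
noncomputable def NTDD.satSet (C : NTDD V) (τ : V → Bool) : Finset ℕ :=
  C.nodes.filter (fun g => C.sat g τ)

lemma mem_satSet {C : NTDD V} {τ : V → Bool} {g : ℕ} :
    g ∈ C.satSet τ ↔ g ∈ C.nodes ∧ C.sat g τ := by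
  classical
  simp [NTDD.satSet]

open Classical in
noncomputable def pushSet (ns : Finset ℕ) (E : ℕ → Finset (ℕ × ℕ)) (p : ℕ × ℕ) : Finset ℕ :=
  ns.filter (fun h => ∃ q ∈ E h, q.1 ∈ decS p.1 ∧ q.2 ∈ decS p.2)

/-- The powerset / subset construction. -/
noncomputable def det : NTDD V → NTDD V
  | .leaf x ns lab =>
      .leaf x {encS (posSet ns lab), encS (negSet ns lab)}
        (fun g =>
          if posSet ns lab = negSet ns lab then
            (if g = encS (posSet ns lab) then .one else .zero)
          else if g = encS (posSet ns lab) then .pos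
          else if g = encS (negSet ns lab) then .neg else .zero)
  | .node l r ns E =>
      .node (det l) (det r) (ns.powerset.image encS)
        (fun g => ((det l).nodes ×ˢ (det r).nodes).filter
           (fun p => encS (pushSet ns E p) = g))

lemma satSet_leaf (x : V) (ns : Finset ℕ) (lab : ℕ → TLab) (τ : V → Bool) :
    (NTDD.leaf x ns lab).satSet τ =
      if τ x = true then posSet ns lab else negSet ns lab := by
  classical
  ext g
  by_cases hτ : τ x = true <;> cases h : lab g <;>
    simp [NTDD.satSet, NTDD.nodes, NTDD.sat, posSet, negSet, h, hτ,
      eq_false_of_ne_true, Finset.mem_filter]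

lemma pushSet_eq {l r : NTDD V} {ns : Finset ℕ} {E : ℕ → Finset (ℕ × ℕ)}
    (hWF : (NTDD.node l r ns E).WF) (τ : V → Bool) (p : ℕ × ℕ)
    (h1 : decS p.1 = l.satSet τ) (h2 : decS p.2 = r.satSet τ) :
    pushSet ns E p = (NTDD.node l r ns E).satSet τ := by
  classical
  ext h
  rw [mem_satSet]
  simp only [pushSet, Finset.mem_filter, h1, h2, NTDD.nodes, NTDD.sat]
  constructor
  · rintro ⟨hns, q, hq, hq1, hq2⟩
    exact ⟨hns, q, hq, (mem_satSet.1 hq1).2, (mem_satSet.1 hq2).2⟩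
  · rintro ⟨hns, q, hq, hl, hr⟩
    exact ⟨hns, q, hq, mem_satSet.2 ⟨(hWF.2.2 h hns q hq).1, hl⟩,
      mem_satSet.2 ⟨(hWF.2.2 h hns q hq).2, hr⟩⟩

lemma det_main (C : NTDD V) (hWF : C.WF) :
    (det C).shape = C.shape ∧ (det C).WF ∧ (det C).Det ∧ (det C).Full ∧
    (∀ τ, encS (C.satSet τ) ∈ (det C).nodes) ∧
    (∀ τ g, (det C).sat g τ ↔ g = encS (C.satSet τ)) := by
  classical
  induction C with
  | leaf x ns lab =>
    set St := posSet ns lab with hSt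
    set Sf := negSet ns lab with hSf
    have hmem : ∀ τ, encS ((NTDD.leaf x ns lab).satSet τ) ∈ (det (NTDD.leaf x ns lab)).nodes := by
      intro τ
      rw [satSet_leaf]
      by_cases hτ : τ x = true <;> simp [det, NTDD.nodes, hτ, ← hSt, ← hSf]
    have hiff : ∀ τ g, (det (NTDD.leaf x ns lab)).sat g τ ↔
        g = encS ((NTDD.leaf x ns lab).satSet τ) := by
      intro τ g
      rw [satSet_leaf]
      by_cases hSS : St = Sf
      · by_cases hg : g = encS Sf <;>
          by_cases hτ : τ x = true <;>
          simp [det, NTDD.sat, ← hSt, ← hSf, hSS, hg, hτ]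
      · have hne : encS St ≠ encS Sf := fun h => hSS (encS_inj h)
        by_cases hτ : τ x = true <;>
          by_cases hg1 : g = encS St <;>
          by_cases hg2 : g = encS Sf <;>
          simp_all [det, NTDD.sat, ← hSt, ← hSf]
    refine ⟨rfl, trivial, ?_, ?_, hmem, hiff⟩
    · -- Det
      simp only [det, NTDD.Det]
      by_cases hSS : St = Sf
      · have he : encS St = encS Sf := congrArg encS hSS
        refine ⟨?_, ?_, ?_, ?_⟩
        · intro g hg g' hg' _ _
          simp only [← hSt, ← hSf, Finset.mem_insert, Finset.mem_singleton, ← he,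
            or_self] at hg hg'
          omega
        · intro g hg g' hg' _ _
          simp only [← hSt, ← hSf, Finset.mem_insert, Finset.mem_singleton, ← he,
            or_self] at hg hg'
          omega
        · intro g hg g' hg' _ _
          simp only [← hSt, ← hSf, Finset.mem_insert, Finset.mem_singleton, ← he,
            or_self] at hg hg'
          omega
        · intro g hg _ g' hg' hgg'
          simp only [← hSt, ← hSf, Finset.mem_insert, Finset.mem_singleton, ← he,
            or_self] at hg hg'
          exact absurd (hg'.trans hg.symm) hgg'
      · have hne : encS St ≠ encS Sf := fun h => hSS (encS_inj h)
        refine ⟨?_, ?_, ?_, ?_⟩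
        · intro g hg g' hg' h h'
          simp only [← hSt, ← hSf, Finset.mem_insert, Finset.mem_singleton] at hg hg'
          rcases hg with rfl | rfl <;> rcases hg' with rfl | rfl <;>
            simp_all [← hSt, ← hSf, hSS, hne, Ne.symm hne]
        · intro g hg g' hg' h h'
          simp only [← hSt, ← hSf, Finset.mem_insert, Finset.mem_singleton] at hg hg'
          rcases hg with rfl | rfl <;> rcases hg' with rfl | rfl <;>
            simp_all [← hSt, ← hSf, hSS, hne, Ne.symm hne]
        · intro g hg g' hg' h h'
          simp only [← hSt, ← hSf, Finset.mem_insert, Finset.mem_singleton] at hg hg'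
          rcases hg with rfl | rfl <;> rcases hg' with rfl | rfl <;>
            simp_all [← hSt, ← hSf, hSS, hne, Ne.symm hne]
        · intro g hg h g' hg' hgg'
          simp only [← hSt, ← hSf, Finset.mem_insert, Finset.mem_singleton] at hg hg'
          rcases hg with rfl | rfl <;>
            simp_all [← hSt, ← hSf, hSS, hne, Ne.symm hne]
    · -- Full
      intro D hD τ
      have : D = det (NTDD.leaf x ns lab) := hD
      subst this
      exact ⟨encS ((NTDD.leaf x ns lab).satSet τ), hmem τ, (hiff τ _).2 rfl⟩
  | node l r ns E ihl ihr =>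
    obtain ⟨shl, wfl, detl, fulll, meml, iffl⟩ := ihl hWF.1
    obtain ⟨shr, wfr, detr, fullr, memr, iffr⟩ := ihr hWF.2.1
    have hmem : ∀ τ, encS ((NTDD.node l r ns E).satSet τ) ∈ (det (NTDD.node l r ns E)).nodes := by
      intro τ
      simp only [det, NTDD.nodes, Finset.mem_image]
      exact ⟨_, Finset.mem_powerset.2 (Finset.filter_subset _ _), rfl⟩
    have hiff : ∀ τ g, (det (NTDD.node l r ns E)).sat g τ ↔
        g = encS ((NTDD.node l r ns E).satSet τ) := by
      intro τ g
      constructor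
      · rintro ⟨p, hp, h1, h2⟩
        rw [Finset.mem_filter] at hp
        have e1 : p.1 = encS (l.satSet τ) := (iffl τ p.1).1 h1
        have e2 : p.2 = encS (r.satSet τ) := (iffr τ p.2).1 h2
        rw [← hp.2, pushSet_eq hWF τ p (by rw [e1, decS_encS]) (by rw [e2, decS_encS])]
      · rintro rfl
        refine ⟨(encS (l.satSet τ), encS (r.satSet τ)), ?_, (iffl τ _).2 rfl, (iffr τ _).2 rfl⟩
        rw [Finset.mem_filter]
        refine ⟨Finset.mem_product.2 ⟨meml τ, memr τ⟩, ?_⟩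
        rw [pushSet_eq hWF τ _ (by simp [decS_encS]) (by simp [decS_encS])]
    refine ⟨?_, ⟨wfl, wfr, ?_⟩, ⟨detl, detr, ?_⟩, ?_, hmem, hiff⟩
    · simp [det, NTDD.shape, shl, shr]
    · intro g _ p hp
      exact Finset.mem_product.1 (Finset.mem_filter.1 hp).1
    · intro g _ g' _ hgg'
      rw [Finset.disjoint_left]
      intro p hp hp'
      exact hgg' ((Finset.mem_filter.1 hp).2 ▸ (Finset.mem_filter.1 hp').2 ▸ rfl)
    · intro D hD τ
      rcases hD with rfl | hD | hD
      · exact ⟨_, hmem τ, (hiff τ _).2 rfl⟩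
      · exact fulll D hD τ
      · exact fullr D hD τ

lemma det_width (C : NTDD V) : (det C).width ≤ 2 ^ C.width := by
  induction C with
  | leaf x ns lab =>
    rcases ns.eq_empty_or_nonempty with rfl | hne
    · simp [det, NTDD.width, posSet, negSet]
    · have h1 : 1 ≤ ns.card := Finset.card_pos.2 hne
      calc (det (NTDD.leaf x ns lab)).width ≤ 2 := by
            simp only [det, NTDD.width]
            exact le_trans (Finset.card_insert_le _ _) (by simp)
        _ ≤ 2 ^ (NTDD.leaf x ns lab).width := by
            simpa [NTDD.width] using Nat.pow_le_pow_right (by norm_num) h1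
  | node l r ns E ihl ihr =>
    simp only [det, NTDD.width]
    have hcard : (ns.powerset.image encS).card = 2 ^ ns.card := by
      rw [Finset.card_image_of_injective _ encS_inj, Finset.card_powerset]
    refine max_le ?_ (max_le ?_ ?_)
    · rw [hcard]
      exact Nat.pow_le_pow_right (by norm_num) (le_max_left _ _)
    · exact le_trans ihl (Nat.pow_le_pow_right (by norm_num)
        (le_trans (le_max_left _ _) (le_max_right _ _)))
    · exact le_trans ihr (Nat.pow_le_pow_right (by norm_num)
        (le_trans (le_max_right _ _) (le_max_right _ _)))

end DetAux

/-- Determinization: for every nTDD `C` of width `k`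
respecting a vtree `T` over a finite variable set `X`, there exists a full
TDD `C'` respecting `T`, of width at most `2^k`, computing the same Boolean
function as `C`. -/
theorem stmt12 {V : Type} [DecidableEq V] (X : Finset V) (T : Vtree V)
    (hTp : T.Proper) (hTX : T.vars = X)
    (C : NTDD V) (out : ℕ) (hsh : C.shape = T) (hWF : C.WF)
    (hout : out ∈ C.nodes) (k : ℕ) (hk : C.width = k) :
    ∃ (C' : NTDD V) (out' : ℕ),
      C'.shape = T ∧ C'.WF ∧ C'.Det ∧ C'.Full ∧ out' ∈ C'.nodes ∧
      C'.width ≤ 2 ^ k ∧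
      ∀ τ : V → Bool, (C'.sat out' τ ↔ C.sat out τ) := by
  classical
  subst hk hsh
  cases C with
  | leaf x ns lab =>
    have hk1 : 1 ≤ (NTDD.leaf x ns lab).width :=
      Finset.card_pos.2 ⟨out, hout⟩
    have h2k : 2 ≤ 2 ^ (NTDD.leaf x ns lab).width := by
      calc 2 = 2 ^ 1 := rfl
        _ ≤ _ := Nat.pow_le_pow_right (by norm_num) hk1
    cases hl : lab out with
    | pos =>
      refine ⟨NTDD.leaf x {0, 1} (fun g => if g = 0 then .pos else .neg), 0,
        rfl, trivial, ?_, ?_, by simp [NTDD.nodes], ?_, ?_⟩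
      · refine ⟨?_, ?_, ?_, ?_⟩
        · intro g hg g' hg' h h'
          simp only [Finset.mem_insert, Finset.mem_singleton] at hg hg'
          rcases hg with rfl | rfl <;> rcases hg' with rfl | rfl <;> simp_all
        · intro g hg g' hg' h h'
          simp only [Finset.mem_insert, Finset.mem_singleton] at hg hg'
          rcases hg with rfl | rfl <;> rcases hg' with rfl | rfl <;> simp_all
        · intro g hg g' hg' h h'
          simp only [Finset.mem_insert, Finset.mem_singleton] at hg hg'
          rcases hg with rfl | rfl <;> rcases hg' with rfl | rfl <;> simp_all
        · intro g hg h g' hg' hgg'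
          simp only [Finset.mem_insert, Finset.mem_singleton] at hg
          rcases hg with rfl | rfl <;> simp_all
      · intro D hD τ
        have hDeq : D = NTDD.leaf x {0, 1} (fun g => if g = 0 then .pos else .neg) := hD
        subst hDeq
        by_cases hτ : τ x = true
        · exact ⟨0, by simp [NTDD.nodes], by simp [NTDD.sat, hτ]⟩
        · exact ⟨1, by simp [NTDD.nodes], by simp [NTDD.sat, hτ]⟩
      · simpa [NTDD.width] using h2k
      · intro τ
        simp [NTDD.sat, hl]
    | neg =>
      refine ⟨NTDD.leaf x {0, 1} (fun g => if g = 0 then .pos else .neg), 1,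
        rfl, trivial, ?_, ?_, by simp [NTDD.nodes], ?_, ?_⟩
      · refine ⟨?_, ?_, ?_, ?_⟩
        · intro g hg g' hg' h h'
          simp only [Finset.mem_insert, Finset.mem_singleton] at hg hg'
          rcases hg with rfl | rfl <;> rcases hg' with rfl | rfl <;> simp_all
        · intro g hg g' hg' h h'
          simp only [Finset.mem_insert, Finset.mem_singleton] at hg hg'
          rcases hg with rfl | rfl <;> rcases hg' with rfl | rfl <;> simp_all
        · intro g hg g' hg' h h'
          simp only [Finset.mem_insert, Finset.mem_singleton] at hg hg'
          rcases hg with rfl | rfl <;> rcases hg' with rfl | rfl <;> simp_all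
        · intro g hg h g' hg' hgg'
          simp only [Finset.mem_insert, Finset.mem_singleton] at hg
          rcases hg with rfl | rfl <;> simp_all
      · intro D hD τ
        have hDeq : D = NTDD.leaf x {0, 1} (fun g => if g = 0 then .pos else .neg) := hD
        subst hDeq
        by_cases hτ : τ x = true
        · exact ⟨0, by simp [NTDD.nodes], by simp [NTDD.sat, hτ]⟩
        · exact ⟨1, by simp [NTDD.nodes], by simp [NTDD.sat, hτ]⟩
      · simpa [NTDD.width] using h2k
      · intro τ
        simp [NTDD.sat, hl]
    | one =>
      refine ⟨NTDD.leaf x {0, 1} (fun g => if g = 0 then .one else .zero), 0,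
        rfl, trivial, ?_, ?_, by simp [NTDD.nodes], ?_, ?_⟩
      · refine ⟨?_, ?_, ?_, ?_⟩
        · intro g hg g' hg' h h'
          simp only [Finset.mem_insert, Finset.mem_singleton] at hg hg'
          rcases hg with rfl | rfl <;> rcases hg' with rfl | rfl <;> simp_all
        · intro g hg g' hg' h h'
          simp only [Finset.mem_insert, Finset.mem_singleton] at hg hg'
          rcases hg with rfl | rfl <;> rcases hg' with rfl | rfl <;> simp_all
        · intro g hg g' hg' h h'
          simp only [Finset.mem_insert, Finset.mem_singleton] at hg hg'
          rcases hg with rfl | rfl <;> rcases hg' with rfl | rfl <;> simp_all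
        · intro g hg h g' hg' hgg'
          simp only [Finset.mem_insert, Finset.mem_singleton] at hg hg'
          rcases hg with rfl | rfl <;> rcases hg' with rfl | rfl <;> simp_all
      · intro D hD τ
        have hDeq : D = NTDD.leaf x {0, 1} (fun g => if g = 0 then .one else .zero) := hD
        subst hDeq
        exact ⟨0, by simp [NTDD.nodes], by simp [NTDD.sat]⟩
      · simpa [NTDD.width] using h2k
      · intro τ
        simp [NTDD.sat, hl]
    | zero =>
      refine ⟨NTDD.leaf x {0, 1} (fun g => if g = 0 then .one else .zero), 1,
        rfl, trivial, ?_, ?_, by simp [NTDD.nodes], ?_, ?_⟩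
      · refine ⟨?_, ?_, ?_, ?_⟩
        · intro g hg g' hg' h h'
          simp only [Finset.mem_insert, Finset.mem_singleton] at hg hg'
          rcases hg with rfl | rfl <;> rcases hg' with rfl | rfl <;> simp_all
        · intro g hg g' hg' h h'
          simp only [Finset.mem_insert, Finset.mem_singleton] at hg hg'
          rcases hg with rfl | rfl <;> rcases hg' with rfl | rfl <;> simp_all
        · intro g hg g' hg' h h'
          simp only [Finset.mem_insert, Finset.mem_singleton] at hg hg'
          rcases hg with rfl | rfl <;> rcases hg' with rfl | rfl <;> simp_all
        · intro g hg h g' hg' hgg'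
          simp only [Finset.mem_insert, Finset.mem_singleton] at hg hg'
          rcases hg with rfl | rfl <;> rcases hg' with rfl | rfl <;> simp_all
      · intro D hD τ
        have hDeq : D = NTDD.leaf x {0, 1} (fun g => if g = 0 then .one else .zero) := hD
        subst hDeq
        exact ⟨0, by simp [NTDD.nodes], by simp [NTDD.sat]⟩
      · simpa [NTDD.width] using h2k
      · intro τ
        simp [NTDD.sat, hl]
  | node l r ns E =>
    obtain ⟨shl, wfl, detl, fulll, meml, iffl⟩ := det_main l hWF.1
    obtain ⟨shr, wfr, detr, fullr, memr, iffr⟩ := det_main r hWF.2.1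
    have houtns : out ∈ ns := hout
    have hk1 : 1 ≤ (NTDD.node l r ns E).width :=
      le_trans (Finset.card_pos.2 ⟨out, houtns⟩) (le_max_left _ _)
    have h2k : 2 ≤ 2 ^ (NTDD.node l r ns E).width := by
      calc 2 = 2 ^ 1 := rfl
        _ ≤ _ := Nat.pow_le_pow_right (by norm_num) hk1
    set E'' : ℕ → Finset (ℕ × ℕ) := fun g =>
      ((det l).nodes ×ˢ (det r).nodes).filter
        (fun p => if out ∈ pushSet ns E p then g = 0 else g = 1) with hE''
    have hcond : ∀ (τ : V → Bool) (p : ℕ × ℕ),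
        (det l).sat p.1 τ → (det r).sat p.2 τ →
        (out ∈ pushSet ns E p ↔ (NTDD.node l r ns E).sat out τ) := by
      intro τ p h1 h2
      have e1 : p.1 = encS (l.satSet τ) := (iffl τ p.1).1 h1
      have e2 : p.2 = encS (r.satSet τ) := (iffr τ p.2).1 h2
      rw [pushSet_eq hWF τ p (by rw [e1, decS_encS]) (by rw [e2, decS_encS]), mem_satSet]
      exact ⟨fun h => h.2, fun h => ⟨houtns, h⟩⟩
    refine ⟨NTDD.node (det l) (det r) {0, 1} E'', 0,
      by simp [NTDD.shape, shl, shr], ⟨wfl, wfr, ?_⟩, ⟨detl, detr, ?_⟩, ?_, by simp [NTDD.nodes], ?_, ?_⟩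
    · intro g _ p hp
      exact Finset.mem_product.1 (Finset.mem_filter.1 hp).1
    · intro g hg g' hg' hgg'
      rw [Finset.disjoint_left]
      intro p hp hp'
      have c1 := (Finset.mem_filter.1 hp).2
      have c2 := (Finset.mem_filter.1 hp').2
      by_cases hc : out ∈ pushSet ns E p <;> simp_all
    · intro D hD τ
      rcases hD with rfl | hD | hD
      · by_cases hc : out ∈ pushSet ns E (encS (l.satSet τ), encS (r.satSet τ))
        · refine ⟨0, by simp [NTDD.nodes], ⟨(encS (l.satSet τ), encS (r.satSet τ)), ?_,
            (iffl τ _).2 rfl, (iffr τ _).2 rfl⟩⟩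
          exact Finset.mem_filter.2 ⟨Finset.mem_product.2 ⟨meml τ, memr τ⟩, by simp [hc]⟩
        · refine ⟨1, by simp [NTDD.nodes], ⟨(encS (l.satSet τ), encS (r.satSet τ)), ?_,
            (iffl τ _).2 rfl, (iffr τ _).2 rfl⟩⟩
          exact Finset.mem_filter.2 ⟨Finset.mem_product.2 ⟨meml τ, memr τ⟩, by simp [hc]⟩
      · exact fulll D hD τ
      · exact fullr D hD τ
    · -- width
      refine max_le (by simpa using h2k) (max_le ?_ ?_)
      · exact le_trans (det_width l) (Nat.pow_le_pow_right (by norm_num)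
          (le_trans (le_max_left _ _) (le_max_right _ _)))
      · exact le_trans (det_width r) (Nat.pow_le_pow_right (by norm_num)
          (le_trans (le_max_right _ _) (le_max_right _ _)))
    · intro τ
      constructor
      · rintro ⟨p, hp, h1, h2⟩
        have hc := (Finset.mem_filter.1 hp).2
        have : out ∈ pushSet ns E p := by
          by_contra hno
          simp [hno] at hc
        exact (hcond τ p h1 h2).1 this
      · intro hsat
        refine ⟨(encS (l.satSet τ), encS (r.satSet τ)), ?_,
          (iffl τ _).2 rfl, (iffr τ _).2 rfl⟩
        refine Finset.mem_filter.2 ⟨Finset.mem_product.2 ⟨meml τ, memr τ⟩, ?_⟩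
        have : out ∈ pushSet ns E (encS (l.satSet τ), encS (r.satSet τ)) :=
          (hcond τ _ ((iffl τ _).2 rfl) ((iffr τ _).2 rfl)).2 hsat
        simp [this]
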